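/- Suppose the unit circle S¹ ⊂ ℝ² is covered by two closed sets B₁ and B₂ such that for all u, v, w ∈ Bᵢ (i = 1, 2) one has (u·v)(u·w)(v·w) ≥ 0. Then B₁ ∩ B₂ is nonempty. -/

import Mathlib

theorem stmt_2 (B : Fin 2 → Set (EuclideanSpace ℝ (Fin 2)))
    (hsub : ∀ i, B i ⊆ {x : EuclideanSpace ℝ (Fin 2) | ‖x‖ = 1})
    (hclosed : ∀ i, IsClosed (B i))
    (hcover : B 0 ∪ B 1 = {x : EuclideanSpace ℝ (Fin 2) | ‖x‖ = 1})
    (hloc : ∀ i, ∀ u ∈ B i, ∀ v ∈ B i, ∀ w ∈ B i,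
      (inner ℝ u v : ℝ) * (inner ℝ u w : ℝ) * (inner ℝ v w : ℝ) ≥ 0) :
    (B 0 ∩ B 1).Nonempty := by
  by_contra hne
  rw [Set.not_nonempty_iff_eq_empty] at hne
  set S : Set (EuclideanSpace ℝ (Fin 2)) := {x | ‖x‖ = 1} with hSdef
  have hSsph : S = Metric.sphere (0 : EuclideanSpace ℝ (Fin 2)) 1 := by
    ext x; simp [hSdef]
  have hconn : IsPreconnected S := by
    rw [hSsph]
    refine (isConnected_sphere ?_ 0 (by norm_num : (0:ℝ) ≤ 1)).isPreconnected
    rw [← Module.finrank_eq_rank, finrank_euclideanSpace_fin]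
    norm_num
  have hsub2 : S ⊆ B 0 ∨ S ⊆ B 1 := by
    refine isPreconnected_iff_subset_of_disjoint_closed.1 hconn _ _
      (hclosed 0) (hclosed 1) (by rw [hcover]) ?_
    rw [hne, Set.inter_empty]
  -- get an i with S ⊆ B i
  obtain ⟨i, hi⟩ : ∃ i, S ⊆ B i := hsub2.elim (fun h => ⟨0, h⟩) (fun h => ⟨1, h⟩)
  -- three points at angles 0, 2π/3, 4π/3
  set s3 : ℝ := Real.sqrt 3 with hs3def
  have hs3 : s3 ^ 2 = 3 := Real.sq_sqrt (by norm_num)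
  set u : EuclideanSpace ℝ (Fin 2) := (WithLp.equiv 2 (Fin 2 → ℝ)).symm ![1, 0] with hu
  set v : EuclideanSpace ℝ (Fin 2) := (WithLp.equiv 2 (Fin 2 → ℝ)).symm ![-(1/2), s3/2] with hv
  set w : EuclideanSpace ℝ (Fin 2) := (WithLp.equiv 2 (Fin 2 → ℝ)).symm ![-(1/2), -(s3/2)] with hw
  have hs3nonneg : (0:ℝ) ≤ s3 := Real.sqrt_nonneg 3
  have huS : u ∈ S := by
    simp only [hSdef, Set.mem_setOf_eq, EuclideanSpace.norm_eq, hu,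
      WithLp.equiv_symm_apply, PiLp.toLp_apply, WithLp.ofLp_toLp, Fin.sum_univ_two, Matrix.cons_val_zero, Matrix.cons_val_one, Matrix.head_cons]
    norm_num
  have hvS : v ∈ S := by
    simp only [hSdef, Set.mem_setOf_eq, EuclideanSpace.norm_eq, hv,
      WithLp.equiv_symm_apply, PiLp.toLp_apply, WithLp.ofLp_toLp, Fin.sum_univ_two, Matrix.cons_val_zero, Matrix.cons_val_one, Matrix.head_cons]
    rw [Real.norm_eq_abs, Real.norm_eq_abs, sq_abs, sq_abs]
    rw [show (-(1/2):ℝ)^2 + (s3/2)^2 = 1 by nlinarith [hs3]]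
    exact Real.sqrt_one
  have hwS : w ∈ S := by
    simp only [hSdef, Set.mem_setOf_eq, EuclideanSpace.norm_eq, hw,
      WithLp.equiv_symm_apply, PiLp.toLp_apply, WithLp.ofLp_toLp, Fin.sum_univ_two, Matrix.cons_val_zero, Matrix.cons_val_one, Matrix.head_cons]
    rw [Real.norm_eq_abs, Real.norm_eq_abs, sq_abs, sq_abs]
    rw [show (-(1/2):ℝ)^2 + (-(s3/2))^2 = 1 by nlinarith [hs3]]
    exact Real.sqrt_one
  have h1 : (inner ℝ u v : ℝ) = -(1/2) := by
    simp only [hu, hv, PiLp.inner_apply, WithLp.equiv_symm_apply, PiLp.toLp_apply, WithLp.ofLp_toLp, Fin.sum_univ_two,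
      RCLike.inner_apply, conj_trivial, Matrix.cons_val_zero, Matrix.cons_val_one, Matrix.head_cons]
    norm_num
  have h2 : (inner ℝ u w : ℝ) = -(1/2) := by
    simp only [hu, hw, PiLp.inner_apply, WithLp.equiv_symm_apply, PiLp.toLp_apply, WithLp.ofLp_toLp, Fin.sum_univ_two,
      RCLike.inner_apply, conj_trivial, Matrix.cons_val_zero, Matrix.cons_val_one, Matrix.head_cons]
    norm_num
  have h3 : (inner ℝ v w : ℝ) = -(1/2) := by
    simp only [hv, hw, PiLp.inner_apply, WithLp.equiv_symm_apply, PiLp.toLp_apply, WithLp.ofLp_toLp, Fin.sum_univ_two,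
      RCLike.inner_apply, conj_trivial, Matrix.cons_val_zero, Matrix.cons_val_one, Matrix.head_cons]
    nlinarith [hs3]
  have := hloc i u (hi huS) v (hi hvS) w (hi hwS)
  rw [h1, h2, h3] at this
  norm_num at this
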